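/- Let σ > 0, α₀ > 0, and J > 0 with J ≥ α₀σ². Let A ∈ ℝ^{d×d}, B ∈ ℝ^{d×k}, K ∈ ℝ^{k×d}, and set M = A + BK. Suppose Q ⪰ α₀I and R ⪰ α₀I are symmetric matrices, and P is a symmetric positive definite matrix satisfying P = Q + KᵀRK + MᵀPM with σ²·tr(P) ≤ J. Then, with κ = √(J/(α₀σ²)) and γ = α₀σ²/(2J), the controller K is (κ,γ)-strongly stable: there exist an invertible matrix H and a matrix L with M = H L H⁻¹, ‖L‖ ≤ 1−γ, ‖H‖·‖H⁻¹‖ ≤ κ, and moreover ‖K‖ ≤ κ. -/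

import Mathlib

noncomputable section

/-- The operator (spectral) norm of a real matrix: the operator norm of the induced
linear map between Euclidean spaces. -/
def opNorm {m n : ℕ} (A : Matrix (Fin m) (Fin n) ℝ) : ℝ :=
  ‖LinearMap.toContinuousLinearMap (Matrix.toEuclideanLin A)‖

/-- Euclidean norm of a vector in `ℝ^d`. -/
def vnorm {d : ℕ} (x : Fin d → ℝ) : ℝ := Real.sqrt (∑ i, x i ^ 2)

/-- A matrix `M` is `(κ,γ)`-strongly stable (for `κ ≥ 1` and `0 < γ ≤ 1`) if
`M = H L H⁻¹` for some invertible `H` and some `L` with `‖L‖ ≤ 1 − γ` and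
`‖H‖·‖H⁻¹‖ ≤ κ`, where `‖·‖` is the operator (spectral) norm. -/
def StronglyStable {d : ℕ} (κ γ : ℝ) (M : Matrix (Fin d) (Fin d) ℝ) : Prop :=
  1 ≤ κ ∧ 0 < γ ∧ γ ≤ 1 ∧
    ∃ H L : Matrix (Fin d) (Fin d) ℝ, IsUnit H ∧ M = H * L * H⁻¹ ∧
      opNorm L ≤ 1 - γ ∧ opNorm H * opNorm H⁻¹ ≤ κ


open Matrix
open scoped MatrixOrder

set_option maxHeartbeats 1000000

lemma opNorm_le_sqrt {m n : ℕ} (A : Matrix (Fin m) (Fin n) ℝ) {c : ℝ} (hc : 0 ≤ c)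
    (h : (c • (1 : Matrix (Fin n) (Fin n) ℝ) - Aᵀ * A).PosSemidef) :
    opNorm A ≤ Real.sqrt c := by
  refine ContinuousLinearMap.opNorm_le_bound _ (Real.sqrt_nonneg c) (fun x => ?_)
  have key : ∀ v : Fin n → ℝ, (A *ᵥ v) ⬝ᵥ (A *ᵥ v) ≤ c * (v ⬝ᵥ v) := by
    intro v
    have := h.dotProduct_mulVec_nonneg v
    simp only [star_trivial, sub_mulVec, dotProduct_sub, smul_mulVec, one_mulVec,
      dotProduct_smul, smul_eq_mul] at this
    have h2 : v ⬝ᵥ (Aᵀ * A) *ᵥ v = (A *ᵥ v) ⬝ᵥ (A *ᵥ v) := by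
      rw [← mulVec_mulVec, dotProduct_mulVec, vecMul_transpose]
    linarith
  set v : Fin n → ℝ := (WithLp.equiv 2 (Fin n → ℝ)) x with hv
  have hfx : (LinearMap.toContinuousLinearMap (Matrix.toEuclideanLin A)) x
      = (WithLp.equiv 2 (Fin m → ℝ)).symm (A *ᵥ v) := Matrix.toEuclideanLin_apply A x
  have hn1 : ‖(LinearMap.toContinuousLinearMap (Matrix.toEuclideanLin A)) x‖
      = Real.sqrt ((A *ᵥ v) ⬝ᵥ (A *ᵥ v)) := by
    rw [hfx, EuclideanSpace.norm_eq]
    congr 1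
    simp [dotProduct, pow_two]
  have hn2 : ‖x‖ = Real.sqrt (v ⬝ᵥ v) := by
    rw [EuclideanSpace.norm_eq]
    congr 1
    simp [dotProduct, pow_two, hv]
  rw [hn1, hn2, ← Real.sqrt_mul hc]
  exact Real.sqrt_le_sqrt (key v)

lemma psd_smul {d : ℕ} {X : Matrix (Fin d) (Fin d) ℝ} (hX : X.PosSemidef) {c : ℝ}
    (hc : 0 ≤ c) : (c • X).PosSemidef := by
  refine ⟨?_, fun x => ?_⟩
  · have h1 := hX.1
    simp only [IsHermitian, conjTranspose_smul, RCLike.star_def, RCLike.conj_to_real] at *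
    rw [h1]
  · exact (hX.smul hc).2 x

lemma psd_congr {d e : ℕ} {X : Matrix (Fin d) (Fin d) ℝ} (hX : X.PosSemidef)
    (B : Matrix (Fin d) (Fin e) ℝ) : (Bᵀ * X * B).PosSemidef := by
  have := hX.conjTranspose_mul_mul_same B
  rwa [conjTranspose_eq_transpose_of_trivial] at this

lemma psd_trace_bound {d : ℕ} {P : Matrix (Fin d) (Fin d) ℝ} (hP : P.PosSemidef)
    {t : ℝ} (ht : P.trace ≤ t) :
    (t • (1 : Matrix (Fin d) (Fin d) ℝ) - P).PosSemidef := by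
  set S := CFC.sqrt P with hSdef
  have hSS : S * S = P := CFC.sqrt_mul_sqrt_self P (Matrix.nonneg_iff_posSemidef.mpr hP)
  have hSsym : Sᵀ = S := by
    have := (Matrix.nonneg_iff_posSemidef.mp (CFC.sqrt_nonneg P)).1
    rwa [IsHermitian, conjTranspose_eq_transpose_of_trivial] at this
  refine Matrix.PosSemidef.of_dotProduct_mulVec_nonneg ?_ ?_
  · have h1 : ((t • (1 : Matrix (Fin d) (Fin d) ℝ))).IsHermitian := by
      simp [IsHermitian, conjTranspose_smul]
    exact h1.sub hP.1
  · intro x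
    simp only [star_trivial, sub_mulVec, dotProduct_sub, smul_mulVec, one_mulVec,
      dotProduct_smul, smul_eq_mul, sub_nonneg]
    have hvm : x ᵥ* S = S *ᵥ x := by rw [← hSsym, vecMul_transpose, hSsym]
    have hPx : x ⬝ᵥ P *ᵥ x = (S *ᵥ x) ⬝ᵥ (S *ᵥ x) := by
      rw [← hSS, ← mulVec_mulVec, dotProduct_mulVec, hvm]
    rw [hPx]
    have htr : P.trace = ∑ i, ∑ j, S i j ^ 2 := by
      rw [← hSS]
      simp only [trace, diag_apply, mul_apply]
      congr 1; ext i; congr 1; ext j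
      rw [pow_two]
      conv_lhs => rw [show S j i = Sᵀ i j from rfl, hSsym]
    have hcs : (S *ᵥ x) ⬝ᵥ (S *ᵥ x) ≤ (∑ i, ∑ j, S i j ^ 2) * (x ⬝ᵥ x) := by
      simp only [dotProduct, mulVec]
      conv_rhs => rw [Finset.sum_mul]
      refine Finset.sum_le_sum (fun i _ => ?_)
      have hcs2 := Finset.sum_mul_sq_le_sq_mul_sq Finset.univ (fun j => S i j) x
      have e2 : ∑ j, x j * x j = ∑ j, (x j) ^ 2 := by simp [sq]
      rw [← sq, e2]
      exact hcs2
    have hxx : 0 ≤ x ⬝ᵥ x := by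
      exact Finset.sum_nonneg fun i _ => mul_self_nonneg (x i)
    calc (S *ᵥ x) ⬝ᵥ (S *ᵥ x) ≤ (∑ i, ∑ j, S i j ^ 2) * (x ⬝ᵥ x) := hcs
      _ = P.trace * (x ⬝ᵥ x) := by rw [htr]
      _ ≤ t * (x ⬝ᵥ x) := by nlinarith


/-- **Lemma (cost-to-stability).**
Let `σ, α₀ > 0` and `J ≥ α₀σ²`.  Let `M = A + BK`, suppose `Q ⪰ α₀I` and `R ⪰ α₀I`
are symmetric, and `P ≻ 0` solves `P = Q + KᵀRK + MᵀPM` with `σ²·tr(P) ≤ J`.  Then,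
with `κ = √(J/(α₀σ²))` and `γ = α₀σ²/(2J)`, the controller `K` is `(κ,γ)`-strongly
stable: `‖K‖ ≤ κ` and there exist an invertible `H` and `L` with `M = H L H⁻¹`,
`‖L‖ ≤ 1−γ`, `‖H‖·‖H⁻¹‖ ≤ κ` (operator norms). -/
theorem cost_to_strong_stability (d k : ℕ) (σ α₀ J : ℝ)
    (hσ : 0 < σ) (hα₀ : 0 < α₀) (hJ : 0 < J) (hJα : α₀ * σ ^ 2 ≤ J)
    (A : Matrix (Fin d) (Fin d) ℝ) (B : Matrix (Fin d) (Fin k) ℝ)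
    (K : Matrix (Fin k) (Fin d) ℝ)
    (Q : Matrix (Fin d) (Fin d) ℝ) (R : Matrix (Fin k) (Fin k) ℝ)
    (hQ : (Q - α₀ • (1 : Matrix (Fin d) (Fin d) ℝ)).PosSemidef)
    (hR : (R - α₀ • (1 : Matrix (Fin k) (Fin k) ℝ)).PosSemidef)
    (P : Matrix (Fin d) (Fin d) ℝ) (hP : P.PosDef)
    (hLyap : P = Q + Kᵀ * R * K + (A + B * K)ᵀ * P * (A + B * K))
    (hcost : σ ^ 2 * Matrix.trace P ≤ J) :
    opNorm K ≤ Real.sqrt (J / (α₀ * σ ^ 2)) ∧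
      ∃ H L : Matrix (Fin d) (Fin d) ℝ, IsUnit H ∧
        A + B * K = H * L * H⁻¹ ∧
        opNorm L ≤ 1 - α₀ * σ ^ 2 / (2 * J) ∧
        opNorm H * opNorm H⁻¹ ≤ Real.sqrt (J / (α₀ * σ ^ 2)) := by
  have hσ2 : (0:ℝ) < σ ^ 2 := by positivity
  set M : Matrix (Fin d) (Fin d) ℝ := A + B * K with hM
  have hPsd : P.PosSemidef := hP.posSemidef
  -- basic PSD pieces
  have hQpsd : Q.PosSemidef := by
    have := hQ.add (psd_smul (Matrix.PosSemidef.one) hα₀.le)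
    simpa using this
  have hRKpsd : (Kᵀ * R * K).PosSemidef := by
    have hRpsd : R.PosSemidef := by
      have := hR.add (psd_smul (Matrix.PosSemidef.one) hα₀.le)
      simpa using this
    exact psd_congr hRpsd K
  have hMPM : (Mᵀ * P * M).PosSemidef := psd_congr hPsd M
  have hKRK : (Kᵀ * R * K - α₀ • (Kᵀ * K)).PosSemidef := by
    have h := psd_congr hR K
    have e : Kᵀ * (R - α₀ • 1) * K = Kᵀ * R * K - α₀ • (Kᵀ * K) := by
      rw [Matrix.mul_sub, Matrix.sub_mul, Matrix.mul_smul, Matrix.mul_one, Matrix.smul_mul]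
    rwa [e] at h
  have htr : P.trace ≤ J / σ ^ 2 := by
    rw [le_div_iff₀ hσ2]
    linarith [hcost]
  have h1 : ((J / σ ^ 2) • (1 : Matrix (Fin d) (Fin d) ℝ) - P).PosSemidef :=
    psd_trace_bound hPsd htr
  have hPα : (P - α₀ • (1 : Matrix (Fin d) (Fin d) ℝ)).PosSemidef := by
    have h := hQ.add (hRKpsd.add hMPM)
    have e : Q - α₀ • (1 : Matrix (Fin d) (Fin d) ℝ) + (Kᵀ * R * K + Mᵀ * P * M)
        = P - α₀ • 1 := by
      conv_rhs => rw [hLyap]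
      abel
    rwa [e] at h
  -- bound on K
  have hKb : opNorm K ≤ Real.sqrt (J / (α₀ * σ ^ 2)) := by
    have hPKK : (P - α₀ • (Kᵀ * K)).PosSemidef := by
      have h := hQpsd.add (hKRK.add hMPM)
      have e : Q + (Kᵀ * R * K - α₀ • (Kᵀ * K) + Mᵀ * P * M) = P - α₀ • (Kᵀ * K) := by
        conv_rhs => rw [hLyap]
        abel
      rwa [e] at h
    have hX := h1.add hPKK
    have eX : (J / σ ^ 2) • (1 : Matrix (Fin d) (Fin d) ℝ) - P + (P - α₀ • (Kᵀ * K))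
        = (J / σ ^ 2) • 1 - α₀ • (Kᵀ * K) := by abel
    rw [eX] at hX
    have hX2 := psd_smul hX (c := α₀⁻¹) (by positivity)
    have eX2 : α₀⁻¹ • ((J / σ ^ 2) • (1 : Matrix (Fin d) (Fin d) ℝ) - α₀ • (Kᵀ * K))
        = (J / (α₀ * σ ^ 2)) • 1 - Kᵀ * K := by
      rw [smul_sub, smul_smul, smul_smul, inv_mul_cancel₀ hα₀.ne', one_smul]
      congr 2
      field_simp
    rw [eX2] at hX2
    exact opNorm_le_sqrt K (by positivity) hX2
  refine ⟨hKb, ?_⟩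
  -- square root of P
  set S := CFC.sqrt P with hSdef
  have hSS : S * S = P := CFC.sqrt_mul_sqrt_self P (Matrix.nonneg_iff_posSemidef.mpr hPsd)
  have hSsym : Sᵀ = S := by
    have := (Matrix.nonneg_iff_posSemidef.mp (CFC.sqrt_nonneg P)).1
    rwa [IsHermitian, conjTranspose_eq_transpose_of_trivial] at this
  have hdS : IsUnit S.det := by
    have hdd : S.det * S.det = P.det := by rw [← det_mul, hSS]
    have hdP := hP.det_pos
    refine isUnit_iff_ne_zero.mpr (fun h0 => ?_)
    rw [h0, mul_zero] at hdd
    exact absurd hdd.symm (ne_of_gt hdP)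
  have hinv1 : S⁻¹ * S = 1 := nonsing_inv_mul S hdS
  have hinv2 : S * S⁻¹ = 1 := mul_nonsing_inv S hdS
  have hHinv : S⁻¹⁻¹ = S := nonsing_inv_nonsing_inv S hdS
  have hSinvsym : (S⁻¹)ᵀ = S⁻¹ := by rw [transpose_nonsing_inv, hSsym]
  have hSPS : S⁻¹ * P * S⁻¹ = 1 := by
    rw [← hSS, ← Matrix.mul_assoc, hinv1, Matrix.one_mul, hinv2]
  set L : Matrix (Fin d) (Fin d) ℝ := S * M * S⁻¹ with hL
  refine ⟨S⁻¹, L, ?_, ?_, ?_, ?_⟩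
  · exact Matrix.isUnit_nonsing_inv_iff.mpr ((Matrix.isUnit_iff_isUnit_det _).mpr hdS)
  · rw [hHinv, hL]
    rw [Matrix.mul_assoc, Matrix.mul_assoc, hinv1, Matrix.mul_one, ← Matrix.mul_assoc,
      hinv1, Matrix.one_mul]
  · -- bound on L
    set c₂ : ℝ := 1 - α₀ * σ ^ 2 / J with hc₂
    have hx1 : α₀ * σ ^ 2 / J ≤ 1 := by rw [div_le_one hJ]; exact hJα
    have hx0 : 0 ≤ α₀ * σ ^ 2 / J := by positivity
    have hc₂0 : 0 ≤ c₂ := by simp [hc₂]; linarith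
    have hscaled : (α₀ • (1 : Matrix (Fin d) (Fin d) ℝ)
        - (α₀ * σ ^ 2 / J) • P).PosSemidef := by
      have h := psd_smul h1 (c := α₀ * σ ^ 2 / J) hx0
      have e : (α₀ * σ ^ 2 / J) • ((J / σ ^ 2) • (1 : Matrix (Fin d) (Fin d) ℝ) - P)
          = α₀ • 1 - (α₀ * σ ^ 2 / J) • P := by
        rw [smul_sub, smul_smul]
        congr 2
        field_simp
      rwa [e] at h
    have hcP : (c₂ • P - Mᵀ * P * M).PosSemidef := by
      have h := (hQ.add hscaled).add hRKpsd
      have e : Q - α₀ • (1 : Matrix (Fin d) (Fin d) ℝ)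
          + (α₀ • 1 - (α₀ * σ ^ 2 / J) • P) + Kᵀ * R * K
          = c₂ • P - Mᵀ * P * M := by
        rw [hc₂, sub_smul, one_smul]
        nth_rewrite 2 [hLyap]
        abel
      rwa [e] at h
    have hcong := psd_congr hcP S⁻¹
    have eL : Lᵀ * L = S⁻¹ * (Mᵀ * P * M) * S⁻¹ := by
      simp only [hL, Matrix.transpose_mul, hSinvsym, hSsym, ← hSS, Matrix.mul_assoc]
    have e2 : (S⁻¹)ᵀ * (c₂ • P - Mᵀ * P * M) * S⁻¹
        = c₂ • (1 : Matrix (Fin d) (Fin d) ℝ) - Lᵀ * L := by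
      rw [hSinvsym, Matrix.mul_sub, Matrix.sub_mul, eL]
      congr 1
      rw [Matrix.mul_smul, Matrix.smul_mul, hSPS]
    rw [e2] at hcong
    have hLb := opNorm_le_sqrt L hc₂0 hcong
    have hfin : Real.sqrt c₂ ≤ 1 - α₀ * σ ^ 2 / (2 * J) := by
      have h2J : α₀ * σ ^ 2 / (2 * J) = (α₀ * σ ^ 2 / J) / 2 := by
        rw [div_div]; ring_nf
      have h0 : 0 ≤ 1 - α₀ * σ ^ 2 / (2 * J) := by rw [h2J]; linarith
      rw [← Real.sqrt_sq h0]
      apply Real.sqrt_le_sqrt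
      rw [hc₂, h2J]
      nlinarith [sq_nonneg (α₀ * σ ^ 2 / J)]
    exact hLb.trans hfin
  · -- norms of H and H⁻¹
    rw [hHinv]
    have hHn : opNorm S⁻¹ ≤ Real.sqrt α₀⁻¹ := by
      apply opNorm_le_sqrt _ (by positivity)
      have h := psd_smul hPα (c := α₀⁻¹) (by positivity)
      have e : α₀⁻¹ • (P - α₀ • (1 : Matrix (Fin d) (Fin d) ℝ)) = α₀⁻¹ • P - 1 := by
        rw [smul_sub, smul_smul, inv_mul_cancel₀ hα₀.ne', one_smul]
      rw [e] at h
      have hcong := psd_congr h S⁻¹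
      have e2 : (S⁻¹)ᵀ * (α₀⁻¹ • P - 1) * S⁻¹
          = α₀⁻¹ • (1 : Matrix (Fin d) (Fin d) ℝ) - (S⁻¹)ᵀ * S⁻¹ := by
        rw [hSinvsym, Matrix.mul_sub, Matrix.sub_mul, Matrix.mul_one]
        congr 1
        rw [Matrix.mul_smul, Matrix.smul_mul, hSPS]
      rwa [e2] at hcong
    have hSn : opNorm S ≤ Real.sqrt (J / σ ^ 2) := by
      apply opNorm_le_sqrt _ (by positivity)
      rw [hSsym, hSS]
      exact h1
    have h0H : 0 ≤ opNorm S⁻¹ := norm_nonneg _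
    have h0S : 0 ≤ opNorm S := norm_nonneg _
    calc opNorm S⁻¹ * opNorm S ≤ Real.sqrt α₀⁻¹ * Real.sqrt (J / σ ^ 2) := by
          exact mul_le_mul hHn hSn h0S (Real.sqrt_nonneg _)
      _ = Real.sqrt (α₀⁻¹ * (J / σ ^ 2)) := (Real.sqrt_mul (by positivity) _).symm
      _ = Real.sqrt (J / (α₀ * σ ^ 2)) := by congr 1; field_simp

end
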